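/- Let 0 = n_0 < n_1 < n_2 < ⋯ be a strictly increasing sequence of positive integers and let X^1, X^2, X^3, … be binary-valued stochastic processes on a common probability space that are mutually independent, where X^i = (X^i_n)_{n≥1} is n_i-order two-faced for each i. Define the process W = (W_n)_{n≥1} by W_i = X^1_i ⊕ X^2_i ⊕ … ⊕ X^m_i whenever n_{m−1} < i ≤ n_m (addition modulo 2). Then W is twice two-faced: for every integer k ≥ 1, every j ≥ 0 and every word u ∈ {0,1}^k, P(W_{j+1}…W_{j+k} = u) = 2^{−k}. -/

import Mathlib

open MeasureTheory ProbabilityTheory Filter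

/-- The event that the block `X_{j+1} … X_{j+|u|}` of the binary process `X` equals the
word `u` (bits: `false = 0`, `true = 1`; the process is `X 1, X 2, …`). -/
def blockEvent {Ω : Type*} (X : ℕ → Ω → Bool) (j : ℕ) (u : List Bool) : Set Ω :=
  {ω | ∀ i, i < u.length → X (j + 1 + i) ω = u.getD i false}

/-- A binary process `(X_n)_{n≥1}` is `k`-order two-faced if for every `j ≥ 0` and every
word `u ∈ {0,1}^k`, `P(X_{j+1}…X_{j+k} = u) = 2^{-k}`. -/
def IsTwoFaced {Ω : Type*} [MeasurableSpace Ω] (P : Measure Ω)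
    (X : ℕ → Ω → Bool) (k : ℕ) : Prop :=
  ∀ (j : ℕ) (u : List Bool), u.length = k →
    (P (blockEvent X j u)).toReal = ((2 : ℝ) ^ k)⁻¹

/-- A binary process `(X_n)_{n≥1}` is asymptotically `k`-order two-faced if for every
word `u ∈ {0,1}^k`, `lim_{j→∞} P(X_{j+1}…X_{j+k} = u) = 2^{-k}`. -/
def IsAsympTwoFaced {Ω : Type*} [MeasurableSpace Ω] (P : Measure Ω)
    (X : ℕ → Ω → Bool) (k : ℕ) : Prop :=
  ∀ u : List Bool, u.length = k →
    Tendsto (fun j : ℕ => (P (blockEvent X j u)).toReal) atTop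
      (nhds (((2 : ℝ) ^ k)⁻¹))

lemma xor_eq_iff' (a b c : Bool) : xor a b = c ↔ b = xor c a := by revert a b c; decide

lemma xor_xor_cancel' (a c : Bool) : xor a (xor c a) = c := by revert a c; decide

lemma foldl_xor_congr (L : List ℕ) (f g : ℕ → Bool) (h : ∀ l ∈ L, f l = g l) (b : Bool) :
    L.foldl (fun b l => xor b (f l)) b = L.foldl (fun b l => xor b (g l)) b := by
  induction L generalizing b with
  | nil => rfl
  | cons a L ih =>
    simp only [List.foldl_cons]
    rw [h a (by simp)]
    exact ih (fun l hl => h l (by simp [hl])) _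

lemma measurable_foldl_xor {α : Type*} [MeasurableSpace α] (L : List ℕ) (f : ℕ → α → Bool)
    (hf : ∀ l, Measurable (f l)) (g : α → Bool) (hg : Measurable g) :
    Measurable (fun x => L.foldl (fun b l => xor b (f l x)) (g x)) := by
  induction L generalizing g with
  | nil => exact hg
  | cons a L ih =>
    simp only [List.foldl_cons]
    exact ih (fun x => xor (g x) (f a x))
      ((Measurable.of_discrete (f := fun p : Bool × Bool => xor p.1 p.2)).comp
        (hg.prodMk (hf a)))

lemma measurableSet_blockEvent' {Ω : Type*} [MeasurableSpace Ω] (X : ℕ → Ω → Bool)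
    (j : ℕ) (u : List Bool) (hX : ∀ i, i < u.length → Measurable (X (j + 1 + i))) :
    MeasurableSet (blockEvent X j u) := by
  have : blockEvent X j u
      = ⋂ i ∈ Finset.range u.length, X (j + 1 + i) ⁻¹' {u.getD i false} := by
    ext ω; simp [blockEvent, Set.mem_iInter]
  rw [this]
  exact Finset.measurableSet_biInter _ fun i hi =>
    (hX i (Finset.mem_range.mp hi)) (measurableSet_singleton _)

lemma toReal_measure_iUnion {Ω ι : Type*} [MeasurableSpace Ω] (P : Measure Ω)
    [IsProbabilityMeasure P] [Fintype ι] (f : ι → Set Ω)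
    (hd : Pairwise (Function.onFun Disjoint f)) (hm : ∀ i, MeasurableSet (f i)) :
    (P (⋃ i, f i)).toReal = ∑ i, (P (f i)).toReal := by
  have h1 : ⋃ i, f i = ⋃ i ∈ Finset.univ, f i := by simp
  rw [h1, measure_biUnion_finset (fun i _ j _ hij => hd hij) (fun i _ => hm i),
    ENNReal.toReal_sum (fun i _ => measure_ne_top P _)]

lemma blockEvent_ext_sum {Ω : Type*} [MeasurableSpace Ω] (P : Measure Ω)
    [IsProbabilityMeasure P] (X : ℕ → Ω → Bool) (hX : ∀ q, Measurable (X q))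
    (j : ℕ) (u : List Bool) (r : ℕ) :
    (P (blockEvent X j u)).toReal
      = ∑ v : Fin r → Bool, (P (blockEvent X j (u ++ List.ofFn v))).toReal := by
  have hcov : blockEvent X j u = ⋃ v : Fin r → Bool, blockEvent X j (u ++ List.ofFn v) := by
    ext ω
    constructor
    · intro hω
      refine Set.mem_iUnion.mpr ⟨fun t => X (j + 1 + (u.length + t)) ω, fun i hi => ?_⟩
      simp only [List.length_append, List.length_ofFn] at hi
      rcases lt_or_ge i u.length with h | h
      · rw [List.getD_append _ _ _ _ h]; exact hω i h
      · rw [List.getD_append_right _ _ _ _ h]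
        have ht : i - u.length < r := by omega
        have : i = u.length + (i - u.length) := by omega
        rw [this]
        simp [List.getD, ht]
    · intro hω
      obtain ⟨v, hv⟩ := Set.mem_iUnion.mp hω
      intro i hi
      have := hv i (by simp only [List.length_append, List.length_ofFn]; omega)
      rwa [List.getD_append _ _ _ _ hi] at this
  have hd : Pairwise (Function.onFun Disjoint
      (fun v : Fin r → Bool => blockEvent X j (u ++ List.ofFn v))) := by
    intro v v' hne
    obtain ⟨t, ht⟩ := Function.ne_iff.mp hne
    rw [Function.onFun, Set.disjoint_left]
    intro ω h1 h2
    have e1 := h1 (u.length + t) (by simp)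
    have e2 := h2 (u.length + t) (by simp)
    rw [List.getD_append_right _ _ _ _ (by omega)] at e1 e2
    simp only [Nat.add_sub_cancel_left] at e1 e2
    apply ht
    have hlt : (t : ℕ) < r := t.2
    rw [← show ((⟨t, hlt⟩ : Fin r)) = t from rfl] at *
    simp [List.getD, hlt] at e1 e2
    rw [← e1, ← e2]
  rw [hcov, toReal_measure_iUnion P _ hd
    (fun v => measurableSet_blockEvent' X j _ (fun i _ => hX _))]

lemma isTwoFaced_short {Ω : Type*} [MeasurableSpace Ω] (P : Measure Ω)
    [IsProbabilityMeasure P] (X : ℕ → Ω → Bool) (hX : ∀ q, Measurable (X q))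
    {K : ℕ} (h : IsTwoFaced P X K) (j : ℕ) (u : List Bool) (hu : u.length ≤ K) :
    (P (blockEvent X j u)).toReal = (2 : ℝ)⁻¹ ^ u.length := by
  rw [blockEvent_ext_sum P X hX j u (K - u.length)]
  have hc : ∀ v : Fin (K - u.length) → Bool,
      (P (blockEvent X j (u ++ List.ofFn v))).toReal = ((2 : ℝ) ^ K)⁻¹ := by
    intro v
    exact h j _ (by simp; omega)
  rw [Finset.sum_congr rfl fun v _ => hc v, Finset.sum_const, Finset.card_univ]
  have hcard : Fintype.card (Fin (K - u.length) → Bool) = 2 ^ (K - u.length) := by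
    simp [Fintype.card_fun]
  rw [hcard, nsmul_eq_mul]
  have h2 : (2 : ℝ) ^ K = 2 ^ u.length * 2 ^ (K - u.length) := by
    rw [← pow_add]; congr 1; omega
  push_cast
  rw [h2]
  rw [mul_inv]
  rw [inv_pow]
  field_simp

/-- let `0 = n_0 < n_1 < n_2 < ⋯` and let `X^1, X^2, …` be mutually
independent binary processes (here `X i` is the process `X^{i+1}`, which is
`n_{i+1}`-order two-faced). If `W_i = X^1_i ⊕ ⋯ ⊕ X^m_i` whenever `n_{m-1} < i ≤ n_m`,
then `W` is twice two-faced: `k`-order two-faced for every `k ≥ 1`. -/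
theorem xor_series_twice_two_faced {Ω : Type*} [MeasurableSpace Ω]
    (P : Measure Ω) [IsProbabilityMeasure P]
    (n : ℕ → ℕ) (hn0 : n 0 = 0) (hmono : StrictMono n)
    (X : ℕ → ℕ → Ω → Bool) (hX : ∀ i m, Measurable (X i m))
    (hindep : iIndepFun (m := fun _ : ℕ => (inferInstance : MeasurableSpace (ℕ → Bool)))
      (fun i ω (m : ℕ) => X i m ω) P)
    (htf : ∀ i : ℕ, IsTwoFaced P (X i) (n (i + 1)))
    (W : ℕ → Ω → Bool)
    (hW : ∀ (m i : ℕ), n m < i → i ≤ n (m + 1) → ∀ ω,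
      W i ω = (List.range (m + 1)).foldl (fun b j => xor b (X j i ω)) false) :
    ∀ k, 1 ≤ k → IsTwoFaced P W k := by
  classical
  -- index function: for each position q+1 find the block index
  have hmidx : ∀ q : ℕ, ∃ m, n m < q + 1 ∧ q + 1 ≤ n (m + 1) := by
    intro q
    have hex : ∃ t, q + 1 ≤ n t := ⟨q + 1, hmono.le_apply⟩
    have h1 : 1 ≤ Nat.find hex := by
      rcases Nat.eq_zero_or_pos (Nat.find hex) with h | h
      · exfalso; have := Nat.find_spec hex; rw [h, hn0] at this; omega
      · exact h
    refine ⟨Nat.find hex - 1, ?_, ?_⟩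
    · have := Nat.find_min hex (m := Nat.find hex - 1) (by omega)
      omega
    · have hsp := Nat.find_spec hex
      have he : Nat.find hex - 1 + 1 = Nat.find hex := by omega
      rw [he]; exact hsp
  choose midx hmidx1 hmidx2 using hmidx
  have hWf : ∀ (q : ℕ) (ω : Ω), W (q + 1) ω
      = (List.range (midx q + 1)).foldl (fun b l => xor b (X l (q + 1) ω)) false :=
    fun q ω => hW (midx q) (q + 1) (hmidx1 q) (hmidx2 q) ω
  have hWm : ∀ q : ℕ, Measurable (W (q + 1)) := by
    intro q
    have he : W (q + 1) = fun ω =>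
        (List.range (midx q + 1)).foldl (fun b l => xor b (X l (q + 1) ω)) false :=
      funext (hWf q)
    rw [he]
    exact measurable_foldl_xor _ _ (fun l => hX l _) _ measurable_const
  have hfmeas : ∀ i : ℕ, Measurable (fun ω (q : ℕ) => X i q ω) :=
    fun i => measurable_pi_lambda _ fun q => hX i q
  have key : ∀ k j (u : List Bool), u.length = k →
      (P (blockEvent W j u)).toReal = (2 : ℝ)⁻¹ ^ k := by
    intro k
    induction k using Nat.strong_induction_on with
    | _ k IH =>
      intro j u hu
      rcases Nat.eq_zero_or_pos k with hk0 | hkpos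
      · subst hk0
        have hunil : u = [] := List.eq_nil_of_length_eq_zero hu
        subst hunil
        have hbe : blockEvent W j ([] : List Bool) = Set.univ := by
          ext ω; simp [blockEvent]
        rw [hbe]; simp
      · set m := midx (j + k - 1) with hm
        have hnm1 : n m < j + k := by
          have := hmidx1 (j + k - 1); rw [← hm] at this; omega
        have hnm2 : j + k ≤ n (m + 1) := by
          have := hmidx2 (j + k - 1); rw [← hm] at this; omega
        set a := max j (n m) with ha
        set s := a - j with hs
        set r := j + k - a with hr
        have hja : j ≤ a := le_max_left _ _
        have hna : n m ≤ a := le_max_right _ _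
        have hak : a < j + k := by omega
        have hsr : s + r = k := by omega
        have hslt : s < k := by omega
        have hrpos : 1 ≤ r := by omega
        have hrle : r ≤ n (m + 1) := by omega
        have hjs : j + s = a := by omega
        set Y : ℕ → Ω → Bool :=
          fun q ω => (List.range m).foldl (fun b l => xor b (X l q ω)) false with hYdef
        have hYm : ∀ q, Measurable (Y q) :=
          fun q => measurable_foldl_xor _ _ (fun l => hX l q) _ measurable_const
        have hWB : ∀ t, t < r → ∀ ω,
            W (a + 1 + t) ω = xor (Y (a + 1 + t) ω) (X m (a + 1 + t) ω) := by
          intro t ht ω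
          rw [hW m (a + 1 + t) (by omega) (by omega) ω]
          rw [List.range_succ, List.foldl_append]
          rfl
        set Aev := blockEvent W j (u.take s) with hAevdef
        set Yev : (Fin r → Bool) → Set Ω :=
          fun v => {ω | ∀ t : Fin r, Y (a + 1 + (t : ℕ)) ω = v t} with hYevdef
        set Xev : (Fin r → Bool) → Set Ω :=
          fun v => {ω | ∀ t : Fin r, X m (a + 1 + (t : ℕ)) ω
            = xor (u.getD (s + (t : ℕ)) false) (v t)} with hXevdef
        have hutake : (u.take s).length = s := by
          rw [List.length_take, hu]; omega
        have hgetD_take : ∀ i, i < s → (u.take s).getD i false = u.getD i false := by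
          intro i hi
          simp [List.getD, List.getElem?_take_of_lt hi]
        have hAmem : ∀ ω, ω ∈ Aev ↔ ∀ i, i < s → W (j + 1 + i) ω = u.getD i false := by
          intro ω
          constructor
          · intro h i hi
            have := h i (by rw [hutake]; exact hi)
            rwa [hgetD_take i hi] at this
          · intro h i hi
            rw [hutake] at hi
            rw [hgetD_take i hi]
            exact h i hi
        have hdecomp : blockEvent W j u = ⋃ v : Fin r → Bool, (Aev ∩ Yev v ∩ Xev v) := by
          ext ω
          constructor
          · intro hω
            refine Set.mem_iUnion.mpr ⟨fun t => Y (a + 1 + (t : ℕ)) ω,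
              ⟨(hAmem ω).mpr fun i hi => hω i (by omega), fun t => rfl⟩, ?_⟩
            intro t
            have hik : s + (t : ℕ) < k := by have := t.2; omega
            have hh := hω (s + (t : ℕ)) (by omega)
            have hpos : j + 1 + (s + (t : ℕ)) = a + 1 + (t : ℕ) := by omega
            rw [hpos, hWB (t : ℕ) t.2 ω] at hh
            exact (xor_eq_iff' _ _ _).mp hh
          · intro hω
            obtain ⟨v, hv⟩ := Set.mem_iUnion.mp hω
            obtain ⟨⟨hA, hYv⟩, hXv⟩ := hv
            intro i hi
            rw [hu] at hi
            rcases lt_or_ge i s with h | h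
            · exact (hAmem ω).mp hA i h
            · have ht : i - s < r := by omega
              have hpos : j + 1 + i = a + 1 + (i - s) := by omega
              rw [hpos, hWB _ ht ω]
              have h1 := hYv ⟨i - s, ht⟩
              have h2 := hXv ⟨i - s, ht⟩
              simp only [Fin.val_mk] at h1 h2
              rw [h1, h2, show s + (i - s) = i by omega]
              exact xor_xor_cancel' _ _
        have hAevm : MeasurableSet Aev := by
          apply measurableSet_blockEvent'
          intro i _
          have := hWm (j + i)
          rwa [show j + i + 1 = j + 1 + i by omega] at this
        have hYevm : ∀ v, MeasurableSet (Yev v) := by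
          intro v
          have he : Yev v = ⋂ t : Fin r, (Y (a + 1 + (t : ℕ))) ⁻¹' {v t} := by
            ext ω; simp [hYevdef, Set.mem_iInter]
          rw [he]
          exact MeasurableSet.iInter fun t => (hYm _) (measurableSet_singleton _)
        have hXevm : ∀ v, MeasurableSet (Xev v) := by
          intro v
          have he : Xev v = ⋂ t : Fin r,
              (X m (a + 1 + (t : ℕ))) ⁻¹' {xor (u.getD (s + (t : ℕ)) false) (v t)} := by
            ext ω; simp [hXevdef, Set.mem_iInter]
          rw [he]
          exact MeasurableSet.iInter fun t => (hX m _) (measurableSet_singleton _)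
        have hd : Pairwise (Function.onFun Disjoint
            (fun v : Fin r → Bool => Aev ∩ Yev v ∩ Xev v)) := by
          intro v v' hne
          obtain ⟨t, ht⟩ := Function.ne_iff.mp hne
          rw [Function.onFun, Set.disjoint_left]
          intro ω h1 h2
          exact ht ((h1.1.2 t).symm.trans (h2.1.2 t))
        have hdAY : Pairwise (Function.onFun Disjoint
            (fun v : Fin r → Bool => Aev ∩ Yev v)) := by
          intro v v' hne
          obtain ⟨t, ht⟩ := Function.ne_iff.mp hne
          rw [Function.onFun, Set.disjoint_left]
          intro ω h1 h2
          exact ht ((h1.2 t).symm.trans (h2.2 t))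
        have hind := hindep.indepFun_finset (Finset.range m) {m}
          (by simp) hfmeas
        have hmidxlt : ∀ i, i < s → midx (j + i) < m := by
          intro i hi
          have h1 := hmidx1 (j + i)
          have h2 := hmidx2 (j + i)
          have hanm : a = n m := by omega
          have hlt : n (midx (j + i)) < n m := by omega
          exact hmono.lt_iff_lt.mp hlt
        set g1 : Ω → (↥(Finset.range m) → ℕ → Bool) :=
          fun ω i q => X (i : ℕ) q ω with hg1def
        set g2 : Ω → (↥({m} : Finset ℕ) → ℕ → Bool) :=
          fun ω i q => X (i : ℕ) q ω with hg2def
        have hdm : ∀ (q : ℕ) (l : ℕ), Measurable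
            (fun h : ↥(Finset.range m) → ℕ → Bool =>
              if hl : l ∈ Finset.range m then h ⟨l, hl⟩ q else false) := by
          intro q l
          by_cases hl : l ∈ Finset.range m
          · simp only [dif_pos hl]
            exact (measurable_pi_apply q).comp (measurable_pi_apply _)
          · simp only [dif_neg hl]
            exact measurable_const
        have hterm : ∀ v : Fin r → Bool, (P (Aev ∩ Yev v ∩ Xev v)).toReal
            = (P (Aev ∩ Yev v)).toReal * (P (Xev v)).toReal := by
          intro v
          set s1 : Set (↥(Finset.range m) → ℕ → Bool) :=
            {h | (∀ i, i < s → (List.range (midx (j + i) + 1)).foldl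
                  (fun b l => xor b
                    (if hl : l ∈ Finset.range m then h ⟨l, hl⟩ (j + 1 + i) else false)) false
                  = u.getD i false)
              ∧ (∀ t : Fin r, (List.range m).foldl
                  (fun b l => xor b
                    (if hl : l ∈ Finset.range m then h ⟨l, hl⟩ (a + 1 + (t : ℕ)) else false)) false
                  = v t)} with hs1def
          set s2 : Set (↥({m} : Finset ℕ) → ℕ → Bool) :=
            {h | ∀ t : Fin r, h ⟨m, Finset.mem_singleton_self m⟩ (a + 1 + (t : ℕ))
              = xor (u.getD (s + (t : ℕ)) false) (v t)} with hs2def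
          have hs1m : MeasurableSet s1 := by
            have he : s1 = (⋂ i ∈ Finset.range s,
                (fun h : ↥(Finset.range m) → ℕ → Bool =>
                  (List.range (midx (j + i) + 1)).foldl
                    (fun b l => xor b
                      (if hl : l ∈ Finset.range m then h ⟨l, hl⟩ (j + 1 + i) else false)) false)
                  ⁻¹' {u.getD i false})
                ∩ ⋂ t : Fin r,
                (fun h : ↥(Finset.range m) → ℕ → Bool =>
                  (List.range m).foldl
                    (fun b l => xor b
                      (if hl : l ∈ Finset.range m then h ⟨l, hl⟩ (a + 1 + (t : ℕ)) else false)) false)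
                  ⁻¹' {v t} := by
              ext h
              simp [hs1def, Set.mem_iInter]
            rw [he]
            refine MeasurableSet.inter ?_ ?_
            · exact Finset.measurableSet_biInter _ fun i _ =>
                (measurable_foldl_xor _ _ (fun l => hdm _ l) _ measurable_const)
                  (measurableSet_singleton _)
            · exact MeasurableSet.iInter fun t =>
                (measurable_foldl_xor _ _ (fun l => hdm _ l) _ measurable_const)
                  (measurableSet_singleton _)
          have hs2m : MeasurableSet s2 := by
            have he : s2 = ⋂ t : Fin r,
                (fun h : ↥({m} : Finset ℕ) → ℕ → Bool =>
                  h ⟨m, Finset.mem_singleton_self m⟩ (a + 1 + (t : ℕ)))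
                  ⁻¹' {xor (u.getD (s + (t : ℕ)) false) (v t)} := by
              ext h
              simp [hs2def, Set.mem_iInter]
            rw [he]
            exact MeasurableSet.iInter fun t =>
              ((measurable_pi_apply _).comp (measurable_pi_apply _))
                (measurableSet_singleton _)
          have hpre2 : Xev v = g2 ⁻¹' s2 := by
            ext ω
            simp only [hXevdef, hg2def, hs2def, Set.mem_preimage, Set.mem_setOf_eq]
          have hfold1 : ∀ (ω : Ω) (i : ℕ), i < s →
              ((List.range (midx (j + i) + 1)).foldl
                (fun b l => xor b
                  (if hl : l ∈ Finset.range m then X l (j + 1 + i) ω else false)) false)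
              = W (j + 1 + i) ω := by
            intro ω i hi
            rw [foldl_xor_congr _ _ (fun l => X l (j + 1 + i) ω) ?_ false]
            · rw [show j + 1 + i = (j + i) + 1 by omega, hWf (j + i) ω]
            · intro l hl
              have hlm : l ∈ Finset.range m := by
                simp only [List.mem_range] at hl
                have := hmidxlt i hi
                exact Finset.mem_range.mpr (by omega)
              simp [hlm]
          have hfold2 : ∀ (ω : Ω) (q : ℕ),
              ((List.range m).foldl
                (fun b l => xor b
                  (if hl : l ∈ Finset.range m then X l q ω else false)) false)
              = Y q ω := by
            intro ω q
            rw [foldl_xor_congr _ _ (fun l => X l q ω) ?_ false]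
            intro l hl
            have hlm : l ∈ Finset.range m := by
              simp only [List.mem_range] at hl
              exact Finset.mem_range.mpr hl
            simp [hlm]
          have hpre1 : Aev ∩ Yev v = g1 ⁻¹' s1 := by
            ext ω
            simp only [Set.mem_inter_iff, Set.mem_preimage, hs1def, Set.mem_setOf_eq,
              hg1def, hYevdef]
            constructor
            · rintro ⟨hA, hYv⟩
              constructor
              · intro i hi
                rw [hfold1 ω i hi]
                exact (hAmem ω).mp hA i hi
              · intro t
                rw [hfold2 ω _]
                exact hYv t
            · rintro ⟨h1, h2⟩
              constructor
              · refine (hAmem ω).mpr fun i hi => ?_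
                rw [← hfold1 ω i hi]
                exact h1 i hi
              · intro t
                rw [← hfold2 ω (a + 1 + (t : ℕ))]
                exact h2 t
          have hmul : P (Aev ∩ Yev v ∩ Xev v) = P (Aev ∩ Yev v) * P (Xev v) := by
            rw [hpre1, hpre2]
            exact hind.measure_inter_preimage_eq_mul s1 s2 hs1m hs2m
          rw [hmul, ENNReal.toReal_mul]
        have hXweq : ∀ v : Fin r → Bool, (P (Xev v)).toReal = (2 : ℝ)⁻¹ ^ r := by
          intro v
          have hbe : Xev v = blockEvent (X m) a
              (List.ofFn (fun t : Fin r => xor (u.getD (s + (t : ℕ)) false) (v t))) := by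
            ext ω
            simp only [hXevdef, blockEvent, Set.mem_setOf_eq, List.length_ofFn]
            constructor
            · intro h i hi
              have := h ⟨i, hi⟩
              simpa [List.getD, hi] using this
            · intro h t
              have := h (t : ℕ) t.2
              simpa [List.getD, t.2] using this
          rw [hbe]
          have hres := isTwoFaced_short P (X m) (hX m) (htf m) a
            (List.ofFn (fun t : Fin r => xor (u.getD (s + (t : ℕ)) false) (v t)))
            (by simpa using hrle)
          rw [hres]
          simp
        rw [hdecomp, toReal_measure_iUnion P _ hd
          (fun v => (hAevm.inter (hYevm v)).inter (hXevm v))]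
        rw [Finset.sum_congr rfl fun v _ => by rw [hterm v, hXweq v]]
        rw [← Finset.sum_mul]
        have hAsum : ∑ v : Fin r → Bool, (P (Aev ∩ Yev v)).toReal = (P Aev).toReal := by
          rw [← toReal_measure_iUnion P _ hdAY (fun v => hAevm.inter (hYevm v))]
          congr 1
          rw [← Set.inter_iUnion]
          have huniv : ⋃ v : Fin r → Bool, Yev v = Set.univ := by
            ext ω
            simp only [Set.mem_iUnion, Set.mem_univ, iff_true]
            exact ⟨fun t => Y (a + 1 + (t : ℕ)) ω, fun t => rfl⟩
          rw [huniv, Set.inter_univ]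
        rw [hAsum, IH s hslt j (u.take s) hutake, ← pow_add, hsr]
  intro k _ j u hu
  rw [key k j u hu, inv_pow]
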